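/- Let H be a finitely generated module over ℤ[t,t⁻¹] on which multiplication by (t−1) is bijective. Then the ℤ-torsion subgroup T_ℤH = {x ∈ H : n·x = 0 for some nonzero integer n} is finite. -/

import Mathlib

open LaurentPolynomial Polynomial

namespace FLfin

noncomputable section

local notation "Λ" => LaurentPolynomial ℤ

instance : IsNoetherianRing Λ :=
  haveI := LaurentPolynomial.isLocalization (R := ℤ)
  IsLocalization.isNoetherianRing (Submonoid.powers (Polynomial.X : Polynomial ℤ)) Λ inferInstance

/-- Evaluation of a Laurent polynomial at `T = 1`. -/
def eps : Λ →ₐ[ℤ] ℤ := AddMonoidAlgebra.lift ℤ ℤ ℤ 1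

lemma eps_T (n : ℤ) : eps (T n) = 1 := by
  rw [eps, T, AddMonoidAlgebra.lift_single]; simp

lemma eps_toLaurent (g : Polynomial ℤ) : eps (toLaurent g) = g.eval 1 := by
  have h : (eps.toRingHom.comp (toLaurent : Polynomial ℤ →+* Λ)) = Polynomial.evalRingHom 1 := by
    apply Polynomial.ringHom_ext
    · intro a; simp [eps]
    · have := eps_T 1
      simp_all [Polynomial.toLaurent_X]
  exact DFunLike.congr_fun h g

lemma exists_inv (p : ℕ) [Fact p.Prime] (c : ℤ) (hc : ¬ (p:ℤ) ∣ c) :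
    ∃ a : ℤ, (p:ℤ) ∣ a * c - 1 := by
  have h0 : (c : ZMod p) ≠ 0 := fun h => hc ((ZMod.intCast_zmod_eq_zero_iff_dvd _ _).mp h)
  refine ⟨(((c : ZMod p)⁻¹).val : ℤ), ?_⟩
  rw [← ZMod.intCast_zmod_eq_zero_iff_dvd]
  push_cast
  rw [ZMod.natCast_val, ZMod.cast_id, inv_mul_cancel₀ h0, sub_self]

universe u

variable {M : Type u} [AddCommGroup M] [Module Λ M]

lemma C_mul_T_smul (a n : ℤ) (x : M) :
    ((LaurentPolynomial.C a * T n : Λ)) • x = a • ((T n : Λ) • x) := by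
  rw [mul_smul, eq_intCast (LaurentPolynomial.C : ℤ →+* Λ) a, Int.cast_smul_eq_zsmul]

lemma sum_rel (g : Polynomial ℤ) (x : M) (h : (toLaurent g) • x = 0) :
    ∑ j ∈ Finset.range (g.natDegree + 1), g.coeff j • ((T (j:ℤ) : Λ) • x) = 0 := by
  have e1 : toLaurent g = ∑ j ∈ Finset.range (g.natDegree + 1),
      (LaurentPolynomial.C (g.coeff j) * T (j:ℤ)) := by
    conv_lhs => rw [as_sum_range' g _ (Nat.lt_succ_self _)]
    rw [map_sum]
    refine Finset.sum_congr rfl fun j _ => by simp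
  rw [e1, Finset.sum_smul] at h
  rw [← h]
  exact Finset.sum_congr rfl fun j _ => (C_mul_T_smul _ _ _).symm

lemma T_smul_T_smul (m n : ℤ) (x : M) : (T m : Λ) • ((T n : Λ) • x) = (T (m + n) : Λ) • x := by
  rw [← mul_smul, ← T_add]

theorem primeCase (p : ℕ) (hp : p.Prime) [Module.Finite Λ M]
    (hpM : ∀ x : M, (p:ℤ) • x = 0) (r : Λ) (hr1 : r - 1 ∈ Ideal.span {(T 1 - 1 : Λ)})
    (hr0 : ∀ x : M, r • x = 0) : Finite M := by
  classical
  haveI : Fact p.Prime := ⟨hp⟩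
  -- the polynomial relation
  obtain ⟨d, g, hg⟩ := exists_T_pow r
  have hgx : ∀ x : M, (toLaurent g) • x = 0 := by
    intro x
    rw [hg, mul_smul, hr0]
  -- `g.eval 1 = 1`
  have heps : eps r = 1 := by
    obtain ⟨c, hc⟩ := Ideal.mem_span_singleton'.mp hr1
    have := congrArg eps hc
    simp only [map_mul, map_sub, map_one, eps_T] at this
    have h1 : eps r - 1 = 0 := by rw [← this]; ring
    linarith
  have heval : g.eval 1 = 1 := by
    have := congrArg eps (congrArg (fun z => z) hg)
    rw [eps_toLaurent] at this
    simp only [map_mul, eps_T, heps] at this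
    simpa using this
  -- reduction mod p
  set gb : Polynomial (ZMod p) := g.map (Int.castRingHom (ZMod p)) with hgb
  have hgb0 : gb ≠ 0 := by
    intro h
    have : gb.eval 1 = 0 := by rw [h]; simp
    rw [hgb, Polynomial.eval_map, Polynomial.eval₂_at_one, heval] at this
    simpa using this
  set w' : ℕ := gb.natDegree with hw'
  set w : ℕ := gb.natTrailingDegree with hw
  have hww' : w ≤ w' := Polynomial.natTrailingDegree_le_natDegree _
  have hcoeff : ∀ j, gb.coeff j = 0 ↔ (p:ℤ) ∣ g.coeff j := by
    intro j
    rw [hgb, Polynomial.coeff_map]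
    exact ZMod.intCast_zmod_eq_zero_iff_dvd _ _
  have htop : ¬ (p:ℤ) ∣ g.coeff w' := by
    rw [← hcoeff]
    exact fun h => hgb0 (Polynomial.leadingCoeff_eq_zero.mp h)
  have hbot : ¬ (p:ℤ) ∣ g.coeff w := by
    rw [← hcoeff]
    exact Polynomial.trailingCoeff_nonzero_iff_nonzero.mpr hgb0
  have hhigh : ∀ j, w' < j → (p:ℤ) ∣ g.coeff j := fun j hj =>
    (hcoeff j).mp (Polynomial.coeff_eq_zero_of_natDegree_lt hj)
  have hlow : ∀ j, j < w → (p:ℤ) ∣ g.coeff j := fun j hj =>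
    (hcoeff j).mp (Polynomial.coeff_eq_zero_of_lt_natTrailingDegree hj)
  obtain ⟨a', ha'⟩ := exists_inv p _ htop
  obtain ⟨a, ha⟩ := exists_inv p _ hbot
  -- smul helpers
  have hkill : ∀ (c : ℤ) (x : M), (p:ℤ) ∣ c → c • x = 0 := by
    rintro c x ⟨e, rfl⟩
    rw [mul_smul, hpM]
  have hunit : ∀ (b c : ℤ) (x : M), (p:ℤ) ∣ (b * c - 1) → b • (c • x) = x := by
    intro b c x h
    have h2 := hkill _ x h
    rw [sub_smul, mul_smul, one_smul, sub_eq_zero] at h2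
    exact h2
  have hw'deg : w' ≤ g.natDegree := Polynomial.natDegree_map_le
  -- the truncated relation
  have rel1 : ∀ x : M, ∑ j ∈ Finset.range (w' + 1), g.coeff j • ((T (j:ℤ) : Λ) • x) = 0 := by
    intro x
    have h0 := sum_rel g x (hgx x)
    rw [← Finset.sum_range_add_sum_Ico _ (by omega : w' + 1 ≤ g.natDegree + 1)] at h0
    have h1 : ∑ j ∈ Finset.Ico (w' + 1) (g.natDegree + 1),
        g.coeff j • ((T (j:ℤ) : Λ) • x) = 0 := by
      refine Finset.sum_eq_zero fun j hj => ?_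
      have := (Finset.mem_Ico.mp hj).1
      exact hkill _ _ (hhigh j (by omega))
    rw [h1, add_zero] at h0
    exact h0
  -- top relation
  have relTop : ∀ x : M, (T (w':ℤ) : Λ) • x
      = ∑ j ∈ Finset.range w', (-(a' * g.coeff j)) • ((T (j:ℤ) : Λ) • x) := by
    intro x
    have h1 := rel1 x
    rw [Finset.sum_range_succ] at h1
    have h2 : g.coeff w' • ((T (w':ℤ) : Λ) • x)
        = -∑ j ∈ Finset.range w', g.coeff j • ((T (j:ℤ) : Λ) • x) :=
      eq_neg_of_add_eq_zero_right h1
    calc (T (w':ℤ) : Λ) • x = a' • (g.coeff w' • ((T (w':ℤ) : Λ) • x)) :=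
          (hunit a' _ _ ha').symm
      _ = a' • (-∑ j ∈ Finset.range w', g.coeff j • ((T (j:ℤ) : Λ) • x)) := by rw [h2]
      _ = ∑ j ∈ Finset.range w', (-(a' * g.coeff j)) • ((T (j:ℤ) : Λ) • x) := by
          rw [smul_neg, Finset.smul_sum, ← Finset.sum_neg_distrib]
          exact Finset.sum_congr rfl fun j _ => by rw [smul_smul, neg_smul]
  -- inverse relation
  have relInv : ∀ x : M, (T (-1:ℤ) : Λ) • x
      = ∑ j ∈ Finset.Ico (w+1) (w'+1), (-(a * g.coeff j)) • ((T ((j:ℤ) - w - 1) : Λ) • x) := by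
    intro x
    have h1 : ∑ j ∈ Finset.range (w' + 1), g.coeff j • ((T ((j:ℤ) - w - 1) : Λ) • x) = 0 := by
      have h0 := congrArg (fun y => (T (-(w:ℤ)-1) : Λ) • y) (rel1 x)
      simp only [smul_zero, Finset.smul_sum] at h0
      rw [← h0]
      refine Finset.sum_congr rfl fun j _ => Eq.symm ?_
      rw [smul_comm, T_smul_T_smul, show (-(w:ℤ)-1) + (j:ℤ) = (j:ℤ) - w - 1 from by ring]
    rw [← Finset.sum_range_add_sum_Ico _ (by omega : w + 1 ≤ w' + 1),
      Finset.sum_range_succ] at h1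
    have h2 : ∑ j ∈ Finset.range w, g.coeff j • ((T ((j:ℤ) - w - 1) : Λ) • x) = 0 :=
      Finset.sum_eq_zero fun j hj => hkill _ _ (hlow j (Finset.mem_range.mp hj))
    rw [h2, zero_add] at h1
    have h3 : ((w:ℤ) - w - 1) = (-1 : ℤ) := by ring
    rw [h3] at h1
    have h4 : g.coeff w • ((T (-1:ℤ) : Λ) • x)
        = -∑ j ∈ Finset.Ico (w+1) (w'+1), g.coeff j • ((T ((j:ℤ) - w - 1) : Λ) • x) :=
      eq_neg_of_add_eq_zero_left h1
    calc (T (-1:ℤ) : Λ) • x = a • (g.coeff w • ((T (-1:ℤ) : Λ) • x)) := (hunit a _ _ ha).symm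
      _ = a • (-∑ j ∈ Finset.Ico (w+1) (w'+1),
            g.coeff j • ((T ((j:ℤ) - w - 1) : Λ) • x)) := by rw [h4]
      _ = ∑ j ∈ Finset.Ico (w+1) (w'+1), (-(a * g.coeff j)) • ((T ((j:ℤ) - w - 1) : Λ) • x) := by
          rw [smul_neg, Finset.smul_sum, ← Finset.sum_neg_distrib]
          exact Finset.sum_congr rfl fun j _ => by rw [smul_smul, neg_smul]
  -- generators
  obtain ⟨s, hs⟩ : (⊤ : Submodule Λ M).FG := Module.finite_def.mp ‹Module.Finite Λ M›
  set W : Submodule ℤ M := Submodule.span ℤ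
    (((Finset.range (w'+1) ×ˢ s).image (fun q => (T (q.1:ℤ) : Λ) • q.2) : Finset M) : Set M)
    with hW
  have hgen : ∀ x ∈ s, ∀ j : ℕ, j ≤ w' → (T (j:ℤ) : Λ) • x ∈ W := by
    intro x hx j hj
    refine Submodule.subset_span (Finset.mem_coe.mpr (Finset.mem_image.mpr ⟨(j,x), ?_, rfl⟩))
    exact Finset.mem_product.mpr ⟨Finset.mem_range.mpr (by omega), hx⟩
  have powmem : ∀ x ∈ s, ∀ j : ℕ, (T (j:ℤ) : Λ) • x ∈ W := by
    intro x hx j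
    induction j using Nat.strong_induction_on with
    | _ j IH =>
      by_cases hj : j ≤ w'
      · exact hgen x hx j hj
      · push_neg at hj
        have hsplit : (T ((j - w' : ℕ):ℤ) : Λ) • ((T (w':ℤ) : Λ) • x) = (T (j:ℤ) : Λ) • x := by
          rw [T_smul_T_smul, show ((j - w' : ℕ):ℤ) + (w':ℤ) = (j:ℤ) from by omega]
        rw [← hsplit, relTop x, Finset.smul_sum]
        refine Submodule.sum_mem _ fun i hi => ?_
        have hi' : i < w' := Finset.mem_range.mp hi
        rw [smul_comm, T_smul_T_smul]
        rw [show ((j - w' : ℕ):ℤ) + (i:ℤ) = ((j - w' + i : ℕ):ℤ) from by omega]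
        exact Submodule.smul_mem _ _ (IH _ (by omega))
  have Wc1 : ∀ y ∈ W, (T (1:ℤ) : Λ) • y ∈ W := by
    intro y hy
    induction hy using Submodule.span_induction with
    | mem y hy =>
      simp only [Finset.coe_image, Set.mem_image, Finset.mem_coe] at hy
      obtain ⟨⟨j, x⟩, hq, rfl⟩ := hy
      obtain ⟨-, hxs⟩ := Finset.mem_product.mp hq
      rw [T_smul_T_smul]
      have he : (1:ℤ) + (j:ℤ) = ((j+1 : ℕ):ℤ) := by omega
      rw [he]
      exact powmem x hxs _
    | zero => rw [smul_zero]; exact Submodule.zero_mem _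
    | add u v hu hv hu' hv' => rw [smul_add]; exact Submodule.add_mem _ hu' hv'
    | smul z u hu hu' => rw [smul_comm]; exact Submodule.smul_mem _ _ hu'
  have Wcneg : ∀ y ∈ W, (T (-1:ℤ) : Λ) • y ∈ W := by
    intro y hy
    induction hy using Submodule.span_induction with
    | mem y hy =>
      simp only [Finset.coe_image, Set.mem_image, Finset.mem_coe] at hy
      obtain ⟨⟨j, x⟩, hq, rfl⟩ := hy
      obtain ⟨-, hxs⟩ := Finset.mem_product.mp hq
      rw [T_smul_T_smul]
      cases j with
      | zero =>
        rw [show (-1:ℤ) + ((0:ℕ):ℤ) = (-1:ℤ) from by norm_num, relInv x]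
        refine Submodule.sum_mem _ fun i hi => ?_
        obtain ⟨hi1, hi2⟩ := Finset.mem_Ico.mp hi
        rw [show ((i:ℤ) - w - 1) = ((i - w - 1 : ℕ):ℤ) from by omega]
        exact Submodule.smul_mem _ _ (powmem x hxs _)
      | succ k =>
        rw [show (-1:ℤ) + ((k+1:ℕ):ℤ) = ((k:ℕ):ℤ) from by push_cast; ring]
        exact powmem x hxs _
    | zero => rw [smul_zero]; exact Submodule.zero_mem _
    | add u v hu hv hu' hv' => rw [smul_add]; exact Submodule.add_mem _ hu' hv'
    | smul z u hu hu' => rw [smul_comm]; exact Submodule.smul_mem _ _ hu'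
  have WcT : ∀ (m : ℤ), ∀ y ∈ W, (T m : Λ) • y ∈ W := by
    intro m
    induction m using Int.induction_on with
    | zero => intro y hy; rw [T_zero, one_smul]; exact hy
    | succ i IH =>
      intro y hy
      have : (T ((i:ℤ)+1) : Λ) • y = (T (1:ℤ) : Λ) • ((T (i:ℤ) : Λ) • y) := by
        rw [T_smul_T_smul, show (1:ℤ) + (i:ℤ) = (i:ℤ) + 1 from by ring]
      rw [this]
      exact Wc1 _ (IH y hy)
    | pred i IH =>
      intro y hy
      have : (T (-(i:ℤ)-1) : Λ) • y = (T (-1:ℤ) : Λ) • ((T (-(i:ℤ)) : Λ) • y) := by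
        rw [T_smul_T_smul, show (-1:ℤ) + (-(i:ℤ)) = -(i:ℤ) - 1 from by ring]
      rw [this]
      exact Wcneg _ (IH y hy)
  have WcL : ∀ (ρ : Λ), ∀ y ∈ W, ρ • y ∈ W := by
    intro ρ
    induction ρ using LaurentPolynomial.induction_on' with
    | add u v hu hv =>
      intro y hy
      rw [add_smul]
      exact Submodule.add_mem _ (hu y hy) (hv y hy)
    | C_mul_T n c =>
      intro y hy
      rw [C_mul_T_smul]
      exact Submodule.smul_mem _ _ (WcT n y hy)
  have Wtop : ∀ x : M, x ∈ W := by
    intro x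
    have hx : x ∈ Submodule.span Λ (s : Set M) := by rw [hs]; trivial
    induction hx using Submodule.span_induction with
    | mem y hy =>
      have := powmem y hy 0
      rwa [Nat.cast_zero, T_zero, one_smul] at this
    | zero => exact Submodule.zero_mem _
    | add u v hu hv hu' hv' => exact Submodule.add_mem _ hu' hv'
    | smul ρ u hu hu' => exact WcL ρ u hu'
  have hfinZ : Module.Finite ℤ M := by
    refine Module.finite_def.mpr ⟨(Finset.range (w'+1) ×ˢ s).image (fun q => (T (q.1:ℤ) : Λ) • q.2), ?_⟩
    exact eq_top_iff.mpr fun x _ => Wtop x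
  exact Module.finite_of_fg_torsion M fun x =>
    ⟨⟨(p:ℤ), mem_nonZeroDivisors_of_ne_zero (by exact_mod_cast hp.ne_zero)⟩, hpM x⟩

theorem keyFin (n : ℕ) : ∀ {M : Type u} [AddCommGroup M] [Module Λ M] [Module.Finite Λ M],
    (∀ x : M, (n:ℤ) • x = 0) →
    (∃ r : Λ, r - 1 ∈ Ideal.span {(T 1 - 1 : Λ)} ∧ ∀ x : M, r • x = 0) →
    n ≠ 0 → Finite M := by
  induction n using Nat.strong_induction_on with
  | _ n IH =>
    intro M _ _ _ hn hr hn0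
    obtain ⟨r, hr1, hr0⟩ := hr
    rcases eq_or_ne n 1 with rfl | hn1
    · have hz : ∀ x : M, x = 0 := fun x => by
        have := hn x; simpa using this
      have : Subsingleton M := ⟨fun a b => by rw [hz a, hz b]⟩
      exact Finite.of_subsingleton
    · set p := n.minFac with hpdef
      have hpP : p.Prime := Nat.minFac_prime hn1
      set m := n / p with hmdef
      have hmp : m * p = n := Nat.div_mul_cancel (Nat.minFac_dvd n)
      have hm0 : m ≠ 0 := by
        intro h; rw [h, zero_mul] at hmp; exact hn0 hmp.symm
      have hmlt : m < n := Nat.div_lt_self (Nat.pos_of_ne_zero hn0) hpP.one_lt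
      set K : Submodule Λ M :=
        { carrier := {x : M | (m:ℤ) • x = 0}
          add_mem' := fun hx hy => by
            simp only [Set.mem_setOf_eq, smul_add] at *; rw [hx, hy, add_zero]
          zero_mem' := smul_zero _
          smul_mem' := fun ρ x hx => by
            simp only [Set.mem_setOf_eq] at *
            rw [smul_comm, hx, smul_zero] } with hKdef
      haveI : Module.Finite Λ K := Module.Finite.iff_fg.mpr (IsNoetherian.noetherian K)
      have hcoe : ∀ (z : ℤ) (x : ↥K), ((z • x : ↥K) : M) = z • (x : M) := fun z x => rfl
      have finK : Finite ↥K := by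
        refine IH m hmlt (fun x => ?_) ⟨r, hr1, fun x => ?_⟩ hm0
        · exact Subtype.ext (by rw [hcoe]; exact x.2)
        · exact Subtype.ext (hr0 _)
      have finQ : Finite (M ⧸ K) := by
        haveI : Module.Finite Λ (M ⧸ K) :=
          Module.Finite.of_surjective K.mkQ (Submodule.Quotient.mk_surjective K)
        refine primeCase p hpP (fun q => ?_) r hr1 (fun q => ?_)
        · obtain ⟨x, rfl⟩ := Submodule.Quotient.mk_surjective K q
          have h1 : ((p:ℤ) • (Submodule.Quotient.mk x : M ⧸ K))
              = Submodule.Quotient.mk ((p:ℤ) • x) := (map_zsmul K.mkQ (p:ℤ) x).symm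
          rw [h1, Submodule.Quotient.mk_eq_zero]
          show (m:ℤ) • ((p:ℤ) • x) = 0
          rw [← mul_smul]
          have : ((m:ℤ) * (p:ℤ)) = (n:ℤ) := by exact_mod_cast hmp
          rw [this]; exact hn x
        · obtain ⟨x, rfl⟩ := Submodule.Quotient.mk_surjective K q
          have h1 : (r • (Submodule.Quotient.mk x : M ⧸ K))
              = Submodule.Quotient.mk (r • x) := rfl
          rw [h1, hr0, Submodule.Quotient.mk_zero]
      let σ : (M ⧸ K) → M := Function.surjInv (Submodule.Quotient.mk_surjective K)
      have hσ : ∀ q, (Submodule.Quotient.mk (σ q) : M ⧸ K) = q :=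
        fun q => Function.surjInv_eq _ q
      let f : M → (M ⧸ K) × ↥K := fun x => (Submodule.Quotient.mk x,
        ⟨x - σ (Submodule.Quotient.mk x),
          (Submodule.Quotient.eq K).mp (hσ (Submodule.Quotient.mk x)).symm⟩)
      have hf : Function.Injective f := by
        intro x y hxy
        have h1 := congrArg Prod.fst hxy
        have h2 := congrArg (fun z : (M ⧸ K) × ↥K => ((z.2 : ↥K) : M)) hxy
        simp only [f] at h1 h2
        rw [h1] at h2
        exact sub_left_inj.mp h2
      exact Finite.of_injective f hf

end

end FLfin

open LaurentPolynomial in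
/-- If `H` is a finitely generated module over `ℤ[t,t⁻¹]` on which multiplication by
`t - 1` is bijective, then the `ℤ`-torsion subgroup of `H` is finite. -/
theorem stmt_2 (H : Type*) [AddCommGroup H] [Module (LaurentPolynomial ℤ) H]
    [Module.Finite (LaurentPolynomial ℤ) H]
    (hbij : Function.Bijective (fun x : H => (T 1 - 1 : LaurentPolynomial ℤ) • x)) :
    Set.Finite {x : H | ∃ n : ℤ, n ≠ 0 ∧ n • x = 0} := by
  classical
  set NT : Submodule (LaurentPolynomial ℤ) H :=
    { carrier := {x : H | ∃ n : ℤ, n ≠ 0 ∧ n • x = 0}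
      add_mem' := by
        rintro x y ⟨nx, hnx, hx⟩ ⟨ny, hny, hy⟩
        refine ⟨nx * ny, mul_ne_zero hnx hny, ?_⟩
        have h1 : (nx * ny) • x = 0 := by rw [mul_comm, mul_smul, hx, smul_zero]
        have h2 : (nx * ny) • y = 0 := by rw [mul_smul, hy, smul_zero]
        rw [smul_add, h1, h2, add_zero]
      zero_mem' := ⟨1, one_ne_zero, smul_zero 1⟩
      smul_mem' := by
        rintro ρ x ⟨nx, hnx, hx⟩
        exact ⟨nx, hnx, by rw [smul_comm, hx, smul_zero]⟩ } with hNTdef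
  obtain ⟨sN, hsN⟩ : NT.FG := IsNoetherian.noetherian NT
  have hsub : ∀ x ∈ sN, x ∈ NT := fun x hx => hsN ▸ Submodule.subset_span hx
  have hex : ∀ x ∈ sN, ∃ nn : ℤ, nn ≠ 0 ∧ nn • x = 0 := fun x hx => hsub x hx
  choose cf hcf1 hcf2 using hex
  set cf' : H → ℤ := fun x => if h : x ∈ sN then cf x h else 1 with hcf'def
  have hcfx : ∀ (x : H) (hx : x ∈ sN), cf' x = cf x hx := fun x hx => dif_pos hx
  have hcf'1 : ∀ x ∈ sN, cf' x ≠ 0 := fun x hx => by rw [hcfx x hx]; exact hcf1 x hx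
  have hcf'2 : ∀ x ∈ sN, cf' x • x = 0 := fun x hx => by rw [hcfx x hx]; exact hcf2 x hx
  set n₀ : ℤ := ∏ x ∈ sN, cf' x with hn₀def
  have hn₀ : n₀ ≠ 0 := Finset.prod_ne_zero_iff.mpr hcf'1
  have hkillNT : ∀ y ∈ NT, n₀ • y = 0 := by
    intro y hy
    rw [← hsN] at hy
    induction hy using Submodule.span_induction with
    | mem x hx =>
      rw [hn₀def, ← Finset.prod_erase_mul sN cf' hx, mul_smul, hcf'2 x hx, smul_zero]
    | zero => exact smul_zero _
    | add u v hu hv hu' hv' => rw [smul_add, hu', hv', add_zero]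
    | smul a u hu hu' => rw [smul_comm, hu', smul_zero]
  have hle : NT ≤ (Ideal.span {(T 1 - 1 : LaurentPolynomial ℤ)}) • NT := by
    intro x hx
    obtain ⟨y, hy⟩ := hbij.2 x
    have hy' : (T 1 - 1 : LaurentPolynomial ℤ) • y = x := hy
    have hyNT : y ∈ NT := by
      refine ⟨n₀, hn₀, ?_⟩
      apply hbij.1
      show (T 1 - 1 : LaurentPolynomial ℤ) • (n₀ • y) = (T 1 - 1 : LaurentPolynomial ℤ) • (0:H)
      rw [smul_zero, smul_comm, hy']
      exact hkillNT x hx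
    rw [← hy']
    exact Submodule.smul_mem_smul (Submodule.mem_span_singleton_self _) hyNT
  obtain ⟨r, hr1, hr0⟩ :=
    Submodule.exists_sub_one_mem_and_smul_eq_zero_of_fg_of_le_smul _ NT ⟨sN, hsN⟩ hle
  haveI : Module.Finite (LaurentPolynomial ℤ) ↥NT := Module.Finite.iff_fg.mpr ⟨sN, hsN⟩
  have fin1 : Finite ↥NT := by
    refine FLfin.keyFin n₀.natAbs (fun x => ?_) ⟨r, hr1, fun x => ?_⟩
      (Int.natAbs_ne_zero.mpr hn₀)
    · apply Subtype.ext
      have hcoe : ((((n₀.natAbs : ℤ) • x : ↥NT)) : H) = (n₀.natAbs : ℤ) • (x : H) := rfl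
      rw [hcoe]
      show (n₀.natAbs : ℤ) • (x : H) = 0
      rcases Int.natAbs_eq n₀ with h | h
      · rw [← h]; exact hkillNT _ x.2
      · have h2 : ((n₀.natAbs : ℤ)) = -n₀ := by omega
        rw [h2, neg_smul, hkillNT _ x.2, neg_zero]
    · exact Subtype.ext (hr0 _ x.2)
  have fin2 : Finite ↥{x : H | ∃ n : ℤ, n ≠ 0 ∧ n • x = 0} := fin1
  exact Set.finite_coe_iff.mp fin2
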